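/- Let M be a module of a graph G = (V,E). There exists an optimal edge-edition set F (a minimum set of vertex pairs whose symmetric difference with E makes G P_4-free) such that M is a module of the resulting graph H = (V, E △ F). -/

import Mathlib

variable {V : Type*}

/-- `{a,b,c,d}` induces a path `a - b - c - d` on four vertices in `G`. -/
def IsInducedP4 (G : SimpleGraph V) (a b c d : V) : Prop :=
  a ≠ b ∧ a ≠ c ∧ a ≠ d ∧ b ≠ c ∧ b ≠ d ∧ c ≠ d ∧
  G.Adj a b ∧ G.Adj b c ∧ G.Adj c d ∧ ¬ G.Adj a c ∧ ¬ G.Adj a d ∧ ¬ G.Adj b d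

/-- `G` has no induced path on four vertices. -/
def P4Free (G : SimpleGraph V) : Prop := ∀ a b c d : V, ¬ IsInducedP4 G a b c d

/-- `M` is a module of `G`: every vertex outside `M` is adjacent to all or none of `M`. -/
def IsModule (G : SimpleGraph V) (M : Set V) : Prop :=
  ∀ x ∉ M, (∀ v ∈ M, G.Adj x v) ∨ (∀ v ∈ M, ¬ G.Adj x v)

/-- `F` is an edge-deletion set of `G`: a set of edges whose removal makes `G` `P₄`-free. -/
def IsDelSet (G : SimpleGraph V) (F : Set (Sym2 V)) : Prop :=
  F ⊆ G.edgeSet ∧ P4Free (G.deleteEdges F)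

/-- `F` is an optimal (minimum-cardinality) edge-deletion set of `G`. -/
def IsOptDelSet (G : SimpleGraph V) (F : Set (Sym2 V)) : Prop :=
  IsDelSet G F ∧ ∀ F' : Set (Sym2 V), IsDelSet G F' → F.ncard ≤ F'.ncard

/-- `F` is an edge-edition set of `G`: a set of (non-loop) vertex pairs whose symmetric
difference with the edge set of `G` yields a `P₄`-free graph. -/
def IsEditSet (G : SimpleGraph V) (F : Set (Sym2 V)) : Prop :=
  (∀ e ∈ F, ¬ e.IsDiag) ∧ P4Free (SimpleGraph.fromEdgeSet (symmDiff G.edgeSet F))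

/-- `F` is an optimal (minimum-cardinality) edge-edition set of `G`. -/
def IsOptEditSet (G : SimpleGraph V) (F : Set (Sym2 V)) : Prop :=
  IsEditSet G F ∧ ∀ F' : Set (Sym2 V), IsEditSet G F' → F.ncard ≤ F'.ncard

/-! ### Auxiliary constructions -/

/- The graph obtained from `H` by replacing all adjacencies between `M` and its complement by
copies of the adjacencies of the representative `m`. -/
open Classical in
noncomputable def mix (H : SimpleGraph V) (M : Set V) (m : V) : SimpleGraph V where
  Adj x y :=
    if x ∈ M then (if y ∈ M then H.Adj x y else H.Adj m y)
    else (if y ∈ M then H.Adj x m else H.Adj x y)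
  symm := by
    refine ⟨fun x y h => ?_⟩
    by_cases hx : x ∈ M <;> by_cases hy : y ∈ M <;> simp_all [SimpleGraph.adj_comm]
  loopless := by
    refine ⟨fun x h => ?_⟩
    by_cases hx : x ∈ M <;> simp_all

variable {H : SimpleGraph V} {M : Set V} {m : V}

lemma mix_adj_inin {x y : V} (hx : x ∈ M) (hy : y ∈ M) :
    (mix H M m).Adj x y ↔ H.Adj x y := by simp [mix, hx, hy]

lemma mix_adj_outout {x y : V} (hx : x ∉ M) (hy : y ∉ M) :
    (mix H M m).Adj x y ↔ H.Adj x y := by simp [mix, hx, hy]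

lemma mix_adj_outin {x y : V} (hx : x ∉ M) (hy : y ∈ M) :
    (mix H M m).Adj x y ↔ H.Adj x m := by simp [mix, hx, hy]

lemma mix_adj_inout {x y : V} (hx : x ∈ M) (hy : y ∉ M) :
    (mix H M m).Adj x y ↔ H.Adj m y := by simp [mix, hx, hy]

lemma mix_isModule : IsModule (mix H M m) M := by
  intro x hx
  by_cases h : H.Adj x m
  · exact Or.inl fun v hv => (mix_adj_outin hx hv).mpr h
  · exact Or.inr fun v hv hadj => h ((mix_adj_outin hx hv).mp hadj)

lemma mix_distinguish {t u w : V} (ht : t ∉ M) (hu : u ∈ M) (hw : w ∈ M)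
    (h1 : (mix H M m).Adj t u) (h2 : ¬ (mix H M m).Adj t w) : False :=
  h2 ((mix_adj_outin ht hw).mpr ((mix_adj_outin ht hu).mp h1))

lemma mix_p4free (hm : m ∈ M) (hH : P4Free H) : P4Free (mix H M m) := by
  rintro a b c d ⟨nab, nac, nad, nbc, nbd, ncd, hab, hbc, hcd, xac, xad, xbd⟩
  have ne_of_mem : ∀ {u w : V}, u ∈ M → w ∉ M → u ≠ w := fun hu hw h => hw (h ▸ hu)
  by_cases ha : a ∈ M <;> by_cases hb : b ∈ M <;> by_cases hc : c ∈ M <;> by_cases hd : d ∈ M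
  · -- all in M
    exact hH a b c d ⟨nab, nac, nad, nbc, nbd, ncd,
      (mix_adj_inin ha hb).mp hab, (mix_adj_inin hb hc).mp hbc, (mix_adj_inin hc hd).mp hcd,
      fun h => xac ((mix_adj_inin ha hc).mpr h), fun h => xad ((mix_adj_inin ha hd).mpr h),
      fun h => xbd ((mix_adj_inin hb hd).mpr h)⟩
  · -- a b c in, d out : d distinguishes c (adjacent) and b (not adjacent)
    exact mix_distinguish hd hc hb hcd.symm (fun h => xbd h.symm)
  · -- a b d in, c out : c distinguishes b and a
    exact mix_distinguish hc hb ha hbc.symm (fun h => xac h.symm)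
  · -- a b in, c d out
    exact mix_distinguish hc hb ha hbc.symm (fun h => xac h.symm)
  · -- a c d in, b out : b distinguishes c and d
    exact mix_distinguish hb hc hd hbc xbd
  · -- a c in, b d out : d distinguishes c and a
    exact mix_distinguish hd hc ha hcd.symm (fun h => xad h.symm)
  · -- a d in, b c out : b distinguishes a and d
    exact mix_distinguish hb ha hd hab.symm xbd
  · -- only a in M : get the path m - b - c - d in H
    exact hH m b c d ⟨ne_of_mem hm hb, ne_of_mem hm hc, ne_of_mem hm hd, nbc, nbd, ncd,
      (mix_adj_inout ha hb).mp hab, (mix_adj_outout hb hc).mp hbc, (mix_adj_outout hc hd).mp hcd,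
      fun h => xac ((mix_adj_inout ha hc).mpr h), fun h => xad ((mix_adj_inout ha hd).mpr h),
      fun h => xbd ((mix_adj_outout hb hd).mpr h)⟩
  · -- b c d in, a out : a distinguishes b and c
    exact mix_distinguish ha hb hc hab xac
  · -- b c in, a d out
    exact mix_distinguish ha hb hc hab xac
  · -- b d in, a c out : a distinguishes b and d
    exact mix_distinguish ha hb hd hab xad
  · -- only b in M : get the path a - m - c - d in H
    exact hH a m c d ⟨(ne_of_mem hm ha).symm, nac, nad, ne_of_mem hm hc, ne_of_mem hm hd, ncd,
      (mix_adj_outin ha hb).mp hab, (mix_adj_inout hb hc).mp hbc, (mix_adj_outout hc hd).mp hcd,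
      fun h => xac ((mix_adj_outout ha hc).mpr h), fun h => xad ((mix_adj_outout ha hd).mpr h),
      fun h => xbd ((mix_adj_inout hb hd).mpr h)⟩
  · -- c d in, a b out : b distinguishes c and d
    exact mix_distinguish hb hc hd hbc xbd
  · -- only c in M : get the path a - b - m - d in H
    exact hH a b m d ⟨nab, (ne_of_mem hm ha).symm, nad, (ne_of_mem hm hb).symm, nbd,
      ne_of_mem hm hd,
      (mix_adj_outout ha hb).mp hab, (mix_adj_outin hb hc).mp hbc, (mix_adj_inout hc hd).mp hcd,
      fun h => xac ((mix_adj_outin ha hc).mpr h), fun h => xad ((mix_adj_outout ha hd).mpr h),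
      fun h => xbd ((mix_adj_outout hb hd).mpr h)⟩
  · -- only d in M : get the path a - b - c - m in H
    exact hH a b c m ⟨nab, nac, (ne_of_mem hm ha).symm, nbc, (ne_of_mem hm hb).symm,
      (ne_of_mem hm hc).symm,
      (mix_adj_outout ha hb).mp hab, (mix_adj_outout hb hc).mp hbc, (mix_adj_outin hc hd).mp hcd,
      fun h => xac ((mix_adj_outout ha hc).mpr h), fun h => xad ((mix_adj_outin ha hd).mpr h),
      fun h => xbd ((mix_adj_outin hb hd).mpr h)⟩
  · -- none in M
    exact hH a b c d ⟨nab, nac, nad, nbc, nbd, ncd,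
      (mix_adj_outout ha hb).mp hab, (mix_adj_outout hb hc).mp hbc, (mix_adj_outout hc hd).mp hcd,
      fun h => xac ((mix_adj_outout ha hc).mpr h), fun h => xad ((mix_adj_outout ha hd).mpr h),
      fun h => xbd ((mix_adj_outout hb hd).mpr h)⟩

/-! ### Counting -/

/-- The set of "mixed" pairs: one endpoint outside `M`, one inside `M`. -/
def mxSet (M : Set V) : Set (Sym2 V) := Sym2.mk.uncurry '' ((Mᶜ : Set V) ×ˢ M)

lemma mem_mxSet {x y : V} : s(x, y) ∈ mxSet M ↔ (x ∉ M ∧ y ∈ M) ∨ (y ∉ M ∧ x ∈ M) := by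
  constructor
  · rintro ⟨⟨a, b⟩, ⟨ha, hb⟩, heq⟩
    rw [Function.uncurry_apply_pair, Sym2.eq_iff] at heq
    rcases heq with ⟨rfl, rfl⟩ | ⟨rfl, rfl⟩
    · exact Or.inl ⟨ha, hb⟩
    · exact Or.inr ⟨ha, hb⟩
  · rintro (⟨hx, hy⟩ | ⟨hy, hx⟩)
    · exact ⟨(x, y), ⟨hx, hy⟩, rfl⟩
    · exact ⟨(y, x), ⟨hy, hx⟩, Sym2.eq_swap⟩

lemma mem_symmDiff_edgeSet {A B : SimpleGraph V} {x y : V} :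
    s(x, y) ∈ symmDiff A.edgeSet B.edgeSet ↔ ¬ (A.Adj x y ↔ B.Adj x y) := by
  simp only [Set.mem_symmDiff, SimpleGraph.mem_edgeSet]
  tauto

variable (G : SimpleGraph V)

/-- The vertices outside `M` whose `G`- and `H`-adjacency with `v` differ. -/
def badX (G H : SimpleGraph V) (M : Set V) (v : V) : Set V :=
  {x | x ∉ M ∧ ¬ (G.Adj x v ↔ H.Adj x v)}

/-- The mixed (ordered) pairs whose `G`- and `H`-adjacency differ. -/
def badP (G H : SimpleGraph V) (M : Set V) : Set (V × V) :=
  {p | p.1 ∉ M ∧ p.2 ∈ M ∧ ¬ (G.Adj p.1 p.2 ↔ H.Adj p.1 p.2)}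

lemma diff_sdiff_mx :
    symmDiff G.edgeSet (mix H M m).edgeSet \ mxSet M
      = symmDiff G.edgeSet H.edgeSet \ mxSet M := by
  ext e
  induction e with
  | _ x y =>
    simp only [Set.mem_diff, mem_symmDiff_edgeSet, mem_mxSet]
    constructor
    · rintro ⟨h1, h2⟩
      refine ⟨?_, h2⟩
      by_cases hx : x ∈ M <;> by_cases hy : y ∈ M
      · rwa [mix_adj_inin hx hy] at h1
      · exact absurd (Or.inr ⟨hy, hx⟩) h2
      · exact absurd (Or.inl ⟨hx, hy⟩) h2
      · rwa [mix_adj_outout hx hy] at h1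
    · rintro ⟨h1, h2⟩
      refine ⟨?_, h2⟩
      by_cases hx : x ∈ M <;> by_cases hy : y ∈ M
      · rwa [mix_adj_inin hx hy]
      · exact absurd (Or.inr ⟨hy, hx⟩) h2
      · exact absurd (Or.inl ⟨hx, hy⟩) h2
      · rwa [mix_adj_outout hx hy]

lemma diff_inter_mx_mix (hM : IsModule G M) (hm : m ∈ M) :
    symmDiff G.edgeSet (mix H M m).edgeSet ∩ mxSet M
      = Sym2.mk.uncurry '' (badX G H M m ×ˢ M) := by
  have key : ∀ x ∈ (Mᶜ : Set V), ∀ y ∈ M,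
      ((¬ (G.Adj x y ↔ (mix H M m).Adj x y)) ↔ x ∈ badX G H M m) := by
    intro x hx y hy
    have hGxy : G.Adj x y ↔ G.Adj x m := by
      rcases hM x hx with h | h
      · simp [h y hy, h m hm]
      · simp [h y hy, h m hm]
    rw [mix_adj_outin hx hy, hGxy]
    exact ⟨fun h => ⟨hx, h⟩, fun h => h.2⟩
  ext e
  constructor
  · rintro ⟨h1, h2⟩
    obtain ⟨⟨x, y⟩, ⟨hx, hy⟩, rfl⟩ := h2
    rw [Function.uncurry_apply_pair, mem_symmDiff_edgeSet] at h1
    exact ⟨(x, y), ⟨(key x hx y hy).mp h1, hy⟩, rfl⟩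
  · rintro ⟨⟨x, y⟩, ⟨hx, hy⟩, rfl⟩
    refine ⟨?_, ⟨(x, y), ⟨hx.1, hy⟩, rfl⟩⟩
    rw [Function.uncurry_apply_pair, mem_symmDiff_edgeSet]
    exact (key x hx.1 y hy).mpr hx

lemma diff_inter_mx_H :
    symmDiff G.edgeSet H.edgeSet ∩ mxSet M = Sym2.mk.uncurry '' badP G H M := by
  ext e
  constructor
  · rintro ⟨h1, h2⟩
    obtain ⟨⟨x, y⟩, ⟨hx, hy⟩, rfl⟩ := h2
    rw [Function.uncurry_apply_pair, mem_symmDiff_edgeSet] at h1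
    exact ⟨(x, y), ⟨hx, hy, h1⟩, rfl⟩
  · rintro ⟨⟨x, y⟩, ⟨hx, hy, h1⟩, rfl⟩
    exact ⟨mem_symmDiff_edgeSet.mpr h1, (x, y), ⟨hx, hy⟩, rfl⟩

lemma ncard_sym2_image (S : Set (V × V)) (hS : ∀ p ∈ S, p.1 ∉ M ∧ p.2 ∈ M) :
    (Sym2.mk.uncurry '' S).ncard = S.ncard := by
  apply Set.ncard_image_of_injOn
  rintro ⟨a, b⟩ ha ⟨c, d⟩ hc h
  rw [Function.uncurry_apply_pair, Function.uncurry_apply_pair, Sym2.eq_iff] at h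
  rcases h with ⟨rfl, rfl⟩ | ⟨rfl, rfl⟩
  · rfl
  · exact absurd (hS _ hc).2 (hS _ ha).1

lemma ncard_prod (s t : Set V) : (s ×ˢ t).ncard = s.ncard * t.ncard := by
  rw [← Nat.card_coe_set_eq, ← Nat.card_coe_set_eq, ← Nat.card_coe_set_eq,
    Nat.card_congr (Equiv.Set.prod s t), Nat.card_prod]

open Classical in
lemma exists_good_rep [Finite V] (hne : M.Nonempty) :
    ∃ m ∈ M, (badX G H M m).ncard * M.ncard ≤ (badP G H M).ncard := by
  have := Fintype.ofFinite V
  have hMf : M.Finite := Set.toFinite _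
  have hPf : (badP G H M).Finite := Set.toFinite _
  obtain ⟨m, hmM, hmin⟩ := Finset.exists_min_image hMf.toFinset
    (fun v => (badX G H M v).ncard) (hMf.toFinset_nonempty.mpr hne)
  rw [Set.Finite.mem_toFinset] at hmM
  refine ⟨m, hmM, ?_⟩
  have hsum : ∑ v ∈ hMf.toFinset, (badX G H M v).ncard = (badP G H M).ncard := by
    rw [Set.ncard_eq_toFinset_card _ hPf]
    rw [Finset.card_eq_sum_card_fiberwise (f := Prod.snd) (t := hMf.toFinset)
      (fun p hp => by
        rw [Finset.mem_coe, Set.Finite.mem_toFinset] at hp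
        exact (Set.Finite.mem_toFinset _).mpr hp.2.1)]
    refine Finset.sum_congr rfl fun v hv => ?_
    rw [Set.Finite.mem_toFinset] at hv
    rw [Set.ncard_eq_toFinset_card _ (Set.toFinite (badX G H M v))]
    apply Finset.card_bij (fun x _ => (x, v))
    · intro x hx
      rw [Set.Finite.mem_toFinset] at hx
      simp only [Finset.mem_filter, Set.Finite.mem_toFinset]
      exact ⟨⟨hx.1, hv, hx.2⟩, trivial⟩
    · intro x hx x' hx' h
      exact (Prod.mk.injEq ..).mp h |>.1
    · rintro ⟨x, y⟩ hp
      simp only [Finset.mem_filter, Set.Finite.mem_toFinset] at hp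
      obtain ⟨⟨h1, h2, h3⟩, h4⟩ := hp
      subst h4
      exact ⟨x, (Set.Finite.mem_toFinset _).mpr ⟨h1, h3⟩, rfl⟩
  calc (badX G H M m).ncard * M.ncard
      = hMf.toFinset.card • (badX G H M m).ncard := by
        rw [smul_eq_mul, mul_comm, Set.ncard_eq_toFinset_card _ hMf]
    _ ≤ ∑ v ∈ hMf.toFinset, (badX G H M v).ncard :=
        Finset.card_nsmul_le_sum _ _ _ (fun v hv => hmin v hv)
    _ = (badP G H M).ncard := hsum

lemma exists_cheap_rep [Finite V] (hM : IsModule G M) (hne : M.Nonempty) :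
    ∃ m ∈ M, (symmDiff G.edgeSet (mix H M m).edgeSet).ncard
      ≤ (symmDiff G.edgeSet H.edgeSet).ncard := by
  obtain ⟨m, hm, hle⟩ := exists_good_rep G (H := H) hne
  have := Fintype.ofFinite V
  refine ⟨m, hm, ?_⟩
  have h1 : (symmDiff G.edgeSet (mix H M m).edgeSet ∩ mxSet M).ncard
      ≤ (symmDiff G.edgeSet H.edgeSet ∩ mxSet M).ncard := by
    rw [diff_inter_mx_mix G hM hm, diff_inter_mx_H G,
      ncard_sym2_image _ (fun p hp => ⟨hp.1.1, hp.2⟩),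
      ncard_sym2_image _ (fun p hp => ⟨hp.1, hp.2.1⟩), ncard_prod]
    exact hle
  have e1 := Set.ncard_inter_add_ncard_diff_eq_ncard
    (symmDiff G.edgeSet (mix H M m).edgeSet) (mxSet M) (Set.toFinite _)
  have e2 := Set.ncard_inter_add_ncard_diff_eq_ncard
    (symmDiff G.edgeSet H.edgeSet) (mxSet M) (Set.toFinite _)
  rw [← e1, ← e2, diff_sdiff_mx G]
  omega

lemma p4free_bot : P4Free (⊥ : SimpleGraph V) := by
  rintro a b c d ⟨-, -, -, -, -, -, h, -⟩
  exact h

lemma exists_optEditSet (G : SimpleGraph V) : ∃ F, IsOptEditSet G F := by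
  have hwit : ∃ n, ∃ F, IsEditSet G F ∧ F.ncard = n := by
    refine ⟨_, G.edgeSet, ⟨fun e he => G.not_isDiag_of_mem_edgeSet he, ?_⟩, rfl⟩
    rw [symmDiff_self]
    have : SimpleGraph.fromEdgeSet (⊥ : Set (Sym2 V)) = ⊥ := by
      rw [Set.bot_eq_empty, SimpleGraph.fromEdgeSet_empty]
    rw [this]
    exact p4free_bot
  obtain ⟨F, hF, hcard⟩ := Nat.sInf_mem hwit
  exact ⟨F, hF, fun F' hF' => hcard.symm ▸ Nat.sInf_le ⟨F', hF', rfl⟩⟩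

theorem stmt4 [Finite V] (G : SimpleGraph V) (M : Set V) (hM : IsModule G M) :
    ∃ F : Set (Sym2 V), IsOptEditSet G F ∧
      IsModule (SimpleGraph.fromEdgeSet (symmDiff G.edgeSet F)) M := by
  obtain ⟨F₀, hOpt⟩ := exists_optEditSet G
  rcases M.eq_empty_or_nonempty with rfl | hne
  · exact ⟨F₀, hOpt, fun x _ => Or.inl fun v hv => absurd hv (Set.notMem_empty v)⟩
  · set H := SimpleGraph.fromEdgeSet (symmDiff G.edgeSet F₀) with hHdef
    have hH : P4Free H := hOpt.1.2
    have hnd : ∀ e ∈ symmDiff G.edgeSet F₀, ¬ e.IsDiag := by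
      intro e he
      rcases Set.mem_symmDiff.mp he with ⟨h, -⟩ | ⟨h, -⟩
      · exact G.not_isDiag_of_mem_edgeSet h
      · exact hOpt.1.1 e h
    have hEdge : H.edgeSet = symmDiff G.edgeSet F₀ := by
      rw [hHdef, SimpleGraph.edgeSet_fromEdgeSet]
      ext e
      exact ⟨fun h => h.1, fun h => ⟨h, hnd e h⟩⟩
    have hF₀ : symmDiff G.edgeSet H.edgeSet = F₀ := by
      rw [hEdge, symmDiff_symmDiff_cancel_left]
    obtain ⟨m, hm, hcost⟩ := exists_cheap_rep G (H := H) hM hne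
    have hkey : SimpleGraph.fromEdgeSet
        (symmDiff G.edgeSet (symmDiff G.edgeSet (mix H M m).edgeSet)) = mix H M m := by
      rw [symmDiff_symmDiff_cancel_left, SimpleGraph.fromEdgeSet_edgeSet]
    refine ⟨symmDiff G.edgeSet (mix H M m).edgeSet, ⟨⟨?_, ?_⟩, ?_⟩, ?_⟩
    · intro e he
      rcases Set.mem_symmDiff.mp he with ⟨h, -⟩ | ⟨h, -⟩
      · exact G.not_isDiag_of_mem_edgeSet h
      · exact (mix H M m).not_isDiag_of_mem_edgeSet h
    · rw [hkey]
      exact mix_p4free hm hH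
    · intro F' hF'
      calc (symmDiff G.edgeSet (mix H M m).edgeSet).ncard
          ≤ (symmDiff G.edgeSet H.edgeSet).ncard := hcost
        _ = F₀.ncard := by rw [hF₀]
        _ ≤ F'.ncard := hOpt.2 F' hF'
    · rw [hkey]
      exact mix_isModule
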